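/- Assume V is finite, E is an edge relation on V, λ is a multiplier function, and L > 0. If every simple cycle of every length m satisfies ∏_{i<m} λ(c i) ≥ L^m, then every cycle (not necessarily simple) of every length n satisfies ∏_{i<n} λ(c i) ≥ L^n. -/

import Mathlib

/-- `c` is a cycle of length `n` in the directed graph with edge relation `E`. -/
def IsCycle {V : Type*} (E : V → V → Prop) (n : ℕ) (c : Fin (n + 1) → V) : Prop :=
  c (Fin.last n) = c 0 ∧ ∀ i : Fin n, E (c i.castSucc) (c i.succ)

/-- The cycle `c` of length `n` is simple, i.e. its first `n` vertices are
pairwise distinct. -/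
def IsSimpleCycle {V : Type*} (n : ℕ) (c : Fin (n + 1) → V) : Prop :=
  ∀ i j : Fin n, c i.castSucc = c j.castSucc → i = j

/-- The cycle multiplier of a cycle of length `n`. -/
def cycleMult {V : Type*} (lam : V → ℝ) (n : ℕ) (c : Fin (n + 1) → V) : ℝ :=
  ∏ i : Fin n, lam (c i.castSucc)

/-- If every simple cycle of every length `m` has cycle multiplier at least
`L ^ m`, then every (not necessarily simple) cycle of every length `n` has
cycle multiplier at least `L ^ n`. -/
theorem all_cycles_ge_of_simple_cycles_ge
    {V : Type*} [Fintype V]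
    (E : V → V → Prop)
    (lam : V → ℝ) (hlam : ∀ v, 0 < lam v)
    (L : ℝ) (hL : 0 < L)
    (hsimple : ∀ m : ℕ, 1 ≤ m → ∀ c : Fin (m + 1) → V,
        IsCycle E m c → IsSimpleCycle m c → L ^ m ≤ cycleMult lam m c) :
    ∀ n : ℕ, 1 ≤ n → ∀ c : Fin (n + 1) → V,
      IsCycle E n c → L ^ n ≤ cycleMult lam n c := by
  intro n
  induction n using Nat.strong_induction_on with
  | _ n ih =>
  intro hn c hc
  by_cases hs : IsSimpleCycle n c
  · exact hsimple n hn c hc hs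
  · obtain ⟨A, B, hABn, hBn', hAB, hBn, hcab'⟩ : ∃ (A B : ℕ) (hA : A < n + 1)
        (hB : B < n + 1), A < B ∧ B < n ∧ c ⟨A, hA⟩ = c ⟨B, hB⟩ := by
      simp only [IsSimpleCycle, not_forall] at hs
      obtain ⟨i, j, hij, hne⟩ := hs
      rcases lt_or_gt_of_ne (fun h => hne (Fin.ext h)) with h | h
      · refine ⟨i, j, by omega, by omega, h, j.isLt, ?_⟩
        convert hij using 2 <;> exact Fin.ext rfl
      · refine ⟨j, i, by omega, by omega, h, i.isLt, ?_⟩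
        convert hij.symm using 2 <;> exact Fin.ext rfl
    obtain ⟨k, m, hk1, hkn, hm1, hmn, hAm, hmk, hAk, hkBA, hmnk⟩ :
        ∃ k m, 1 ≤ k ∧ k < n ∧ 1 ≤ m ∧ m < n ∧ A < m ∧ m + k = n ∧ A + k = B ∧
          B - A = k ∧ n - k = m :=
      ⟨B - A, n - (B - A), by omega, by omega, by omega, by omega, by omega, by omega,
        by omega, rfl, rfl⟩
    obtain ⟨c1, hc1⟩ : ∃ c1 : Fin (k + 1) → V,
        ∀ t : Fin (k + 1), c1 t = c ⟨A + t.val, by have := t.isLt; omega⟩ :=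
      ⟨_, fun t => rfl⟩
    obtain ⟨c2, hc2le, hc2gt⟩ : ∃ c2 : Fin (m + 1) → V,
        (∀ t : Fin (m + 1), t.val ≤ A → c2 t = c ⟨t.val, by omega⟩) ∧
        (∀ t : Fin (m + 1), A < t.val → c2 t = c ⟨t.val + k, by have := t.isLt; omega⟩) := by
      refine ⟨fun t => if h : t.val ≤ A then c ⟨t.val, by omega⟩
        else c ⟨t.val + k, by have := t.isLt; omega⟩, fun t ht => dif_pos ht,
        fun t ht => dif_neg (by omega)⟩
    obtain ⟨g, hgdef, hgpos⟩ : ∃ g : ℕ → ℝ,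
        (∀ i (h : i < n + 1), g i = lam (c ⟨i, h⟩)) ∧ ∀ i, 0 < g i := by
      refine ⟨fun i => if h : i < n + 1 then lam (c ⟨i, h⟩) else 1,
        fun i h => dif_pos h, fun i => ?_⟩
      dsimp only; split
      · exact hlam _
      · exact one_pos
    -- c1 is a cycle
    have hcyc1 : IsCycle E k c1 := by
      constructor
      · rw [hc1, hc1]
        refine Eq.trans ?_ hcab'.symm
        refine congrArg c (Fin.ext ?_)
        simp only [Fin.val_last, Fin.val_zero]
        omega
      · intro t
        have ht := t.isLt
        rw [hc1, hc1]
        have := hc.2 ⟨A + t.val, by omega⟩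
        convert this using 2 <;>
          (apply Fin.ext; simp only [Fin.coe_castSucc, Fin.val_succ] <;> omega)
    -- c2 is a cycle
    have hcyc2 : IsCycle E m c2 := by
      constructor
      · rw [hc2gt (Fin.last m) (by simp [Fin.val_last]; omega),
          hc2le 0 (by simp)]
        refine Eq.trans ?_ hc.1
        refine congrArg c (Fin.ext ?_)
        simp only [Fin.val_last, Fin.val_zero]
        omega
      · intro t
        have ht := t.isLt
        have hcs : (t.castSucc : ℕ) = t.val := rfl
        have hsu : (t.succ : ℕ) = t.val + 1 := rfl
        rcases lt_trichotomy t.val A with h | h | h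
        · rw [hc2le t.castSucc (by omega), hc2le t.succ (by omega)]
          have := hc.2 ⟨t.val, by omega⟩
          convert this using 2 <;>
            (apply Fin.ext; simp only [Fin.coe_castSucc, Fin.val_succ] <;> omega)
        · rw [hc2le t.castSucc (by omega), hc2gt t.succ (by omega)]
          rw [show (⟨(t.castSucc : ℕ), by omega⟩ : Fin (n+1)) = ⟨A, by omega⟩ from
            Fin.ext (by simp [hcs, h]), hcab']
          have := hc.2 ⟨B, by omega⟩
          convert this using 2 <;>
            (apply Fin.ext; simp only [Fin.coe_castSucc, Fin.val_succ] <;> omega)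
        · rw [hc2gt t.castSucc (by omega), hc2gt t.succ (by omega)]
          have := hc.2 ⟨t.val + k, by omega⟩
          convert this using 2 <;>
            (apply Fin.ext; simp only [Fin.coe_castSucc, Fin.val_succ] <;> omega)
    -- products
    have hmc : cycleMult lam n c = ∏ i ∈ Finset.range n, g i := by
      rw [cycleMult, ← Fin.prod_univ_eq_prod_range g n]
      refine Finset.prod_congr rfl fun i _ => ?_
      rw [hgdef i.val (by omega)]
      exact congrArg (fun x => lam (c x)) (Fin.ext rfl)
    have hmc1 : cycleMult lam k c1 = ∏ i ∈ Finset.Ico A B, g i := by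
      rw [cycleMult, Finset.prod_Ico_eq_prod_range, hkBA,
        ← Fin.prod_univ_eq_prod_range (fun t => g (A + t)) k]
      refine Finset.prod_congr rfl fun t _ => ?_
      have ht := t.isLt
      rw [hc1, hgdef (A + t.val) (by omega)]
      exact congrArg (fun x => lam (c x)) (Fin.ext (by simp [Fin.coe_castSucc]))
    have hmc2 : cycleMult lam m c2 =
        (∏ i ∈ Finset.Ico 0 (A + 1), g i) * ∏ i ∈ Finset.Ico (B + 1) n, g i := by
      have step1 : cycleMult lam m c2 =
          ∏ t ∈ Finset.range m, (if t ≤ A then g t else g (t + k)) := by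
        rw [cycleMult, ← Fin.prod_univ_eq_prod_range (fun t => if t ≤ A then g t else g (t + k)) m]
        refine Finset.prod_congr rfl fun t _ => ?_
        have ht := t.isLt
        by_cases h : (t : ℕ) ≤ A
        · rw [if_pos h, hc2le t.castSucc (by simp [Fin.coe_castSucc]; omega),
            hgdef t.val (by omega)]
          exact congrArg (fun x => lam (c x)) (Fin.ext (by simp [Fin.coe_castSucc]))
        · rw [if_neg h, hc2gt t.castSucc (by simp [Fin.coe_castSucc]; omega),
            hgdef (t.val + k) (by omega)]
          exact congrArg (fun x => lam (c x)) (Fin.ext (by simp [Fin.coe_castSucc]))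
      rw [step1, Finset.range_eq_Ico,
        ← Finset.prod_Ico_consecutive _ (Nat.zero_le (A + 1)) (by omega : A + 1 ≤ m)]
      congr 1
      · refine Finset.prod_congr rfl fun t ht => ?_
        rw [Finset.mem_Ico] at ht
        rw [if_pos (by omega)]
      · have : ∏ t ∈ Finset.Ico (A + 1) m, (if t ≤ A then g t else g (t + k)) =
            ∏ t ∈ Finset.Ico (A + 1) m, g (t + k) := by
          refine Finset.prod_congr rfl fun t ht => ?_
          rw [Finset.mem_Ico] at ht
          rw [if_neg (by omega)]
        rw [this, Finset.prod_Ico_add' g (A + 1) m k,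
          show A + 1 + k = B + 1 from by omega, show m + k = n from hmk]
    -- combine
    have hcomb : cycleMult lam n c = cycleMult lam k c1 * cycleMult lam m c2 := by
      rw [hmc, hmc1, hmc2, Finset.range_eq_Ico,
        ← Finset.prod_Ico_consecutive g (Nat.zero_le A) (by omega : A ≤ n),
        ← Finset.prod_Ico_consecutive g (by omega : A ≤ B) (by omega : B ≤ n),
        Finset.prod_eq_prod_Ico_succ_bot hBn g,
        Finset.prod_Ico_succ_top (Nat.zero_le A) g]
      have hgAB : g A = g B := by
        rw [hgdef A (by omega), hgdef B (by omega), hcab']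
      rw [hgAB]; ring
    have h1 := ih k hkn hk1 c1 hcyc1
    have h2 := ih m hmn hm1 c2 hcyc2
    calc L ^ n = L ^ k * L ^ m := by rw [← pow_add]; congr 1; omega
    _ ≤ cycleMult lam k c1 * cycleMult lam m c2 :=
        mul_le_mul h1 h2 (pow_pos hL m).le ((pow_pos hL k).le.trans h1)
    _ = cycleMult lam n c := hcomb.symm
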